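/- Let γ be a standard Gaussian vector in R^p, u ∈ R^p, a ∈ R^p a unit vector, and z > 0. Then E[|γᵀa|² · 1{‖γ - u‖ ≥ z}] ≤ (2 + |uᵀa|²) · exp(-z²/4 + p/2 + ‖u‖²/2). -/

import Mathlib

open MeasureTheory ProbabilityTheory Real
open scoped NNReal ENNReal

lemma tilt_integral (u : ℝ) (g : ℝ → ℝ) :
    ∫ t, g t * rexp ((t - u) ^ 2 / 4) ∂(gaussianReal 0 1)
      = (Real.sqrt (2 * π))⁻¹ * Real.exp (u ^ 2 / 2) * ∫ t, g (t - u) * rexp (-t ^ 2 / 4) := by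
  rw [gaussianReal_of_var_ne_zero 0 one_ne_zero]
  have hd : gaussianPDF 0 1 = fun x => ((Real.toNNReal (gaussianPDFReal 0 1 x) : ℝ≥0) : ℝ≥0∞) :=
    rfl
  rw [hd, integral_withDensity_eq_integral_smul
    ((measurable_gaussianPDFReal 0 1).real_toNNReal)]
  have h1 : ∀ t : ℝ, (Real.toNNReal (gaussianPDFReal 0 1 t) : ℝ≥0) • (g t * rexp ((t - u) ^ 2 / 4))
      = (Real.sqrt (2 * π))⁻¹ * Real.exp (u ^ 2 / 2)
        * (g t * rexp (-(t + u) ^ 2 / 4)) := by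
    intro t
    rw [NNReal.smul_def, Real.coe_toNNReal _ (gaussianPDFReal_nonneg 0 1 t)]
    simp only [gaussianPDFReal, smul_eq_mul, NNReal.coe_one, mul_one, sub_zero]
    have he : rexp (-t ^ 2 / 2) * rexp ((t - u) ^ 2 / 4)
        = rexp (u ^ 2 / 2) * rexp (-(t + u) ^ 2 / 4) := by
      rw [← Real.exp_add, ← Real.exp_add]; congr 1; ring
    linear_combination (√(2 * π))⁻¹ * g t * he
  simp only [h1]
  rw [integral_const_mul]
  congr 1
  have := MeasureTheory.integral_add_right_eq_self
    (μ := (volume : Measure ℝ)) (fun x : ℝ => g (x - u) * rexp (-x ^ 2 / 4)) u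
  rw [← this]
  congr 1
  ext t
  simp [add_sub_cancel_right]

lemma int_exp0 : ∫ t : ℝ, rexp (-t ^ 2 / 4) = Real.sqrt (4 * π) := by
  have := integral_gaussian (1 / 4)
  simp_rw [show ∀ t : ℝ, -(1 / 4 : ℝ) * t ^ 2 = -t ^ 2 / 4 by intro t; ring] at this
  rw [this, show π / (1 / 4 : ℝ) = 4 * π by ring]

lemma int_exp1 : ∫ t : ℝ, t * rexp (-t ^ 2 / 4) = 0 := by
  have h := integral_neg_eq_self (fun t : ℝ => t * rexp (-t ^ 2 / 4)) volume
  simp only [neg_sq] at h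
  have h2 : ∫ t : ℝ, -t * rexp (-t ^ 2 / 4) = -∫ t : ℝ, t * rexp (-t ^ 2 / 4) := by
    rw [← integral_neg]; congr 1; ext t; ring
  rw [h2] at h
  linarith

lemma int_exp2 : ∫ t : ℝ, t ^ 2 * rexp (-t ^ 2 / 4) = 2 * Real.sqrt (4 * π) := by
  have habs : ∫ t : ℝ, t ^ 2 * rexp (-t ^ 2 / 4)
      = ∫ t : ℝ, (fun s : ℝ => s ^ 2 * rexp (-s ^ 2 / 4)) |t| := by
    congr 1; ext t; simp [sq_abs]
  rw [habs, integral_comp_abs (f := fun s : ℝ => s ^ 2 * rexp (-s ^ 2 / 4))]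
  have h1 : ∫ t in Set.Ioi (0:ℝ), t ^ 2 * rexp (-t ^ 2 / 4)
      = ∫ t in Set.Ioi (0:ℝ), t ^ (2:ℝ) * rexp (-(1/4) * t ^ (2:ℝ)) := by
    congr 1; ext t
    have h2 : t ^ (2:ℝ) = t ^ (2:ℕ) := by
      rw [show ((2:ℝ)) = ((2:ℕ):ℝ) by norm_num, Real.rpow_natCast]
    rw [h2]; push_cast; ring_nf
  rw [h1, integral_rpow_mul_exp_neg_mul_rpow (by norm_num) (by norm_num) (by norm_num)]
  have hg : Real.Gamma (((2:ℝ) + 1) / 2) = Real.sqrt π / 2 := by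
    rw [show ((2:ℝ) + 1) / 2 = 1/2 + 1 by norm_num, Real.Gamma_add_one (by norm_num),
      Real.Gamma_one_half_eq]
    ring
  have h8 : ((1:ℝ)/4) ^ (-((2:ℝ)+1)/2) = 8 := by
    rw [show (-((2:ℝ)+1)/2) = (1/2) * (-3) by norm_num, Real.rpow_mul (by norm_num)]
    rw [show ((1:ℝ)/4) ^ ((1:ℝ)/2) = 1/2 by
      rw [← Real.sqrt_eq_rpow, show (1:ℝ)/4 = (1/2)^2 by norm_num, Real.sqrt_sq (by norm_num)]]
    rw [show (-3:ℝ) = ((-3:ℤ):ℝ) by norm_num, Real.rpow_intCast]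
    norm_num
  rw [hg, h8, show (4:ℝ) * π = 2^2 * π by norm_num, Real.sqrt_mul (by norm_num) π,
    Real.sqrt_sq (by norm_num)]
  ring

lemma Ib0 : Integrable (fun t : ℝ => rexp (-t ^ 2 / 4)) := by
  have := integrable_exp_neg_mul_sq (show (0:ℝ) < 1/4 by norm_num)
  have he : (fun t : ℝ => rexp (-t ^ 2 / 4)) = fun t : ℝ => rexp (-(1/4:ℝ) * t ^ 2) := by
    ext t; congr 1; ring
  rw [he]; exact this

lemma Ib1 : Integrable (fun t : ℝ => t * rexp (-t ^ 2 / 4)) := by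
  have := integrable_mul_exp_neg_mul_sq (show (0:ℝ) < 1/4 by norm_num)
  have he : (fun t : ℝ => t * rexp (-t ^ 2 / 4)) = fun t : ℝ => t * rexp (-(1/4:ℝ) * t ^ 2) := by
    ext t; congr 2; ring
  rw [he]; exact this

lemma Ib2 : Integrable (fun t : ℝ => t ^ 2 * rexp (-t ^ 2 / 4)) := by
  have := integrable_rpow_mul_exp_neg_mul_sq (show (0:ℝ) < 1/4 by norm_num)
    (show (-1:ℝ) < 2 by norm_num)
  have h2 : ∀ x : ℝ, x ^ (2:ℝ) = x ^ (2:ℕ) := fun x => by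
    rw [show ((2:ℝ)) = ((2:ℕ):ℝ) by norm_num, Real.rpow_natCast]
  simp only [h2] at this
  have he : (fun t : ℝ => t ^ 2 * rexp (-t ^ 2 / 4))
      = fun t : ℝ => t ^ (2:ℕ) * rexp (-(1/4:ℝ) * t ^ 2) := by
    ext t; congr 2; ring
  rw [he]; exact this

lemma tilt_integrable (u : ℝ) (g : ℝ → ℝ)
    (hg : Integrable (fun t => g (t - u) * rexp (-t ^ 2 / 4)) volume) :
    Integrable (fun t => g t * rexp ((t - u) ^ 2 / 4)) (gaussianReal 0 1) := by
  rw [gaussianReal_of_var_ne_zero 0 one_ne_zero]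
  rw [integrable_withDensity_iff (measurable_gaussianPDF 0 1)
    (ae_of_all _ fun x => ENNReal.ofReal_lt_top)]
  have heq : (fun x : ℝ => g x * rexp ((x - u) ^ 2 / 4) * (gaussianPDF 0 1 x).toReal)
      = fun x : ℝ => ((Real.sqrt (2 * π))⁻¹ * Real.exp (u ^ 2 / 2))
        * ((fun t : ℝ => g (t - u) * rexp (-t ^ 2 / 4)) (x + u)) := by
    ext x
    rw [gaussianPDF, ENNReal.toReal_ofReal (gaussianPDFReal_nonneg 0 1 x)]
    simp only [gaussianPDFReal, sub_zero, NNReal.coe_one, mul_one, add_sub_cancel_right]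
    have he : rexp (-x ^ 2 / 2) * rexp ((x - u) ^ 2 / 4)
        = rexp (u ^ 2 / 2) * rexp (-(x + u) ^ 2 / 4) := by
      rw [← Real.exp_add, ← Real.exp_add]; congr 1; ring
    linear_combination (√(2 * π))⁻¹ * g x * he
  rw [heq]
  have := (hg.comp_sub_right (-u)).const_mul ((Real.sqrt (2 * π))⁻¹ * Real.exp (u ^ 2 / 2))
  simpa [sub_neg_eq_add] using this

lemma sqrt2pi_ne : Real.sqrt (2 * π) ≠ 0 := by
  positivity

lemma sqrt4pi : Real.sqrt (4 * π) = Real.sqrt 2 * Real.sqrt (2 * π) := by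
  rw [← Real.sqrt_mul (by norm_num) (2 * π)]
  congr 1; ring

lemma gint0 (u : ℝ) : Integrable (fun t : ℝ => rexp ((t - u) ^ 2 / 4)) (gaussianReal 0 1) := by
  have h := tilt_integrable u (fun _ => 1) (by simpa using Ib0)
  simpa using h

lemma gint1 (u : ℝ) :
    Integrable (fun t : ℝ => t * rexp ((t - u) ^ 2 / 4)) (gaussianReal 0 1) := by
  refine tilt_integrable u (fun t => t) ?_
  have he : (fun t : ℝ => (t - u) * rexp (-t ^ 2 / 4))
      = fun t : ℝ => t * rexp (-t ^ 2 / 4) - u * rexp (-t ^ 2 / 4) := by ext t; ring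
  rw [he]; exact Ib1.sub (Ib0.const_mul u)

lemma gint2 (u : ℝ) :
    Integrable (fun t : ℝ => t ^ 2 * rexp ((t - u) ^ 2 / 4)) (gaussianReal 0 1) := by
  refine tilt_integrable u (fun t => t ^ 2) ?_
  have he : (fun t : ℝ => (t - u) ^ 2 * rexp (-t ^ 2 / 4))
      = fun t : ℝ => (t ^ 2 * rexp (-t ^ 2 / 4) - (2 * u) * (t * rexp (-t ^ 2 / 4)))
          + u ^ 2 * rexp (-t ^ 2 / 4) := by ext t; ring
  rw [he]; exact (Ib2.sub (Ib1.const_mul (2 * u))).add (Ib0.const_mul (u ^ 2))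

lemma gval0 (u : ℝ) :
    ∫ t, rexp ((t - u) ^ 2 / 4) ∂(gaussianReal 0 1) = Real.sqrt 2 * rexp (u ^ 2 / 2) := by
  have h := tilt_integral u (fun _ => 1)
  simp only [one_mul] at h
  rw [h, int_exp0, sqrt4pi]
  field_simp

lemma gval1 (u : ℝ) :
    ∫ t, t * rexp ((t - u) ^ 2 / 4) ∂(gaussianReal 0 1)
      = Real.sqrt 2 * rexp (u ^ 2 / 2) * (-u) := by
  have h := tilt_integral u (fun t => t)
  rw [h]
  have he : (fun t : ℝ => (t - u) * rexp (-t ^ 2 / 4))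
      = fun t : ℝ => t * rexp (-t ^ 2 / 4) - u * rexp (-t ^ 2 / 4) := by ext t; ring
  rw [he, integral_sub Ib1 (Ib0.const_mul u), int_exp1, integral_const_mul, int_exp0, sqrt4pi]
  field_simp
  ring

lemma gval2 (u : ℝ) :
    ∫ t, t ^ 2 * rexp ((t - u) ^ 2 / 4) ∂(gaussianReal 0 1)
      = Real.sqrt 2 * rexp (u ^ 2 / 2) * (2 + u ^ 2) := by
  have h := tilt_integral u (fun t => t ^ 2)
  rw [h]
  have he : (fun t : ℝ => (t - u) ^ 2 * rexp (-t ^ 2 / 4))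
      = fun t : ℝ => (t ^ 2 * rexp (-t ^ 2 / 4) - (2 * u) * (t * rexp (-t ^ 2 / 4)))
          + u ^ 2 * rexp (-t ^ 2 / 4) := by ext t; ring
  have i1 : Integrable (fun t : ℝ =>
      t ^ 2 * rexp (-t ^ 2 / 4) - 2 * u * (t * rexp (-t ^ 2 / 4))) volume :=
    Ib2.sub (Ib1.const_mul (2 * u))
  have i2 : Integrable (fun t : ℝ => u ^ 2 * rexp (-t ^ 2 / 4)) volume :=
    Ib0.const_mul (u ^ 2)
  have i3 : Integrable (fun t : ℝ => 2 * u * (t * rexp (-t ^ 2 / 4))) volume :=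
    Ib1.const_mul (2 * u)
  rw [he, integral_add i1 i2, integral_sub Ib2 i3, int_exp2, integral_const_mul, int_exp1,
    integral_const_mul, int_exp0, sqrt4pi]
  field_simp
  ring

lemma pi_integrable {p : ℕ} (f : Fin p → ℝ → ℝ)
    (hf : ∀ i, Integrable (f i) (gaussianReal 0 1)) :
    Integrable (fun x : Fin p → ℝ => ∏ i, f i (x i))
      (Measure.pi fun _ : Fin p => gaussianReal 0 1) := by
  letI : MeasureSpace ℝ := ⟨gaussianReal 0 1⟩
  haveI : SigmaFinite (volume : Measure ℝ) := by
    show SigmaFinite (gaussianReal 0 1); infer_instance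
  exact MeasureTheory.Integrable.fintype_prod (f := f) hf

lemma pi_eval {p : ℕ} (f : Fin p → ℝ → ℝ) :
    ∫ x : Fin p → ℝ, ∏ i, f i (x i) ∂(Measure.pi fun _ : Fin p => gaussianReal 0 1)
      = ∏ i, ∫ t, f i t ∂(gaussianReal 0 1) := by
  letI : MeasureSpace ℝ := ⟨gaussianReal 0 1⟩
  haveI : SigmaFinite (volume : Measure ℝ) := by
    show SigmaFinite (gaussianReal 0 1); infer_instance
  exact MeasureTheory.integral_fintype_prod_eq_prod f

section Expand

variable {p : ℕ} (u : Fin p → ℝ)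

private noncomputable def ff (u : Fin p → ℝ) (i j k : Fin p) (t : ℝ) : ℝ :=
  t ^ ((if k = i then 1 else 0) + (if k = j then 1 else 0) : ℕ) * rexp ((t - u k) ^ 2 / 4)

lemma ff_prod (i j : Fin p) (x : Fin p → ℝ) :
    (∏ k, ff u i j k (x k)) = x i * x j * ∏ k, rexp ((x k - u k) ^ 2 / 4) := by
  unfold ff
  rw [Finset.prod_mul_distrib]
  congr 1
  have h1 : ∀ k : Fin p, (x k) ^ ((if k = i then 1 else 0) + (if k = j then 1 else 0) : ℕ)
      = (if k = i then x k else 1) * (if k = j then x k else 1) := by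
    intro k
    rw [pow_add]
    congr 1 <;> split <;> simp
  simp only [h1]
  rw [Finset.prod_mul_distrib, Finset.prod_ite_eq' Finset.univ i (fun k => x k),
    Finset.prod_ite_eq' Finset.univ j (fun k => x k)]
  simp

lemma ff_integrable (i j k : Fin p) : Integrable (ff u i j k) (gaussianReal 0 1) := by
  unfold ff
  by_cases hi : k = i <;> by_cases hj : k = j
  · simp only [if_pos hi, if_pos hj]
    exact gint2 (u k)
  · simp only [if_pos hi, if_neg hj]
    norm_num
    exact gint1 (u k)
  · simp only [if_neg hi, if_pos hj]
    norm_num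
    exact gint1 (u k)
  · simp only [if_neg hi, if_neg hj]
    norm_num
    exact gint0 (u k)

lemma ff_integral (i j k : Fin p) :
    ∫ t, ff u i j k t ∂(gaussianReal 0 1)
      = (Real.sqrt 2 * rexp ((u k) ^ 2 / 2)) *
        ((if k = i then -u k else 1) * (if k = j then -u k else 1)
          + (if k = i then (if k = j then 2 else 0) else 0)) := by
  unfold ff
  by_cases hi : k = i <;> by_cases hj : k = j
  · simp only [if_pos hi, if_pos hj]
    rw [show ((1:ℕ) + 1) = 2 from rfl, gval2 (u k)]
    ring
  · simp only [if_pos hi, if_neg hj]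
    rw [show ((1:ℕ) + 0) = 1 from rfl]
    simp only [pow_one]
    rw [gval1 (u k)]
    ring
  · simp only [if_neg hi, if_pos hj]
    rw [show ((0:ℕ) + 1) = 1 from rfl]
    simp only [pow_one]
    rw [gval1 (u k)]
    ring
  · simp only [if_neg hi, if_neg hj]
    rw [show ((0:ℕ) + 0) = 0 from rfl]
    simp only [pow_zero, one_mul]
    rw [gval0 (u k)]
    ring

end Expand

lemma prod_ff_integral {p : ℕ} (u : Fin p → ℝ) (i j : Fin p) :
    (∏ k, ∫ t, ff u i j k t ∂(gaussianReal 0 1))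
      = ((Real.sqrt 2) ^ p * rexp ((∑ k, (u k) ^ 2) / 2))
        * (u i * u j + if i = j then 2 else 0) := by
  have h1 : (∏ k, ∫ t, ff u i j k t ∂(gaussianReal 0 1))
      = (∏ k : Fin p, (Real.sqrt 2 * rexp ((u k) ^ 2 / 2)))
        * ∏ k : Fin p, ((if k = i then -u k else 1) * (if k = j then -u k else 1)
            + (if k = i then (if k = j then 2 else 0) else 0)) := by
    rw [← Finset.prod_mul_distrib]
    exact Finset.prod_congr rfl fun k _ => ff_integral u i j k
  rw [h1]
  have h2 : (∏ k : Fin p, (Real.sqrt 2 * rexp ((u k) ^ 2 / 2)))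
      = (Real.sqrt 2) ^ p * rexp ((∑ k, (u k) ^ 2) / 2) := by
    rw [Finset.prod_mul_distrib, Finset.prod_const, ← Real.exp_sum]
    congr 1
    · simp
    · rw [← Finset.sum_div]
  rw [h2]
  congr 1
  by_cases hij : i = j
  · subst hij
    have h3 : ∀ k : Fin p, ((if k = i then -u k else 1) * (if k = i then -u k else 1)
        + (if k = i then (if k = i then 2 else 0) else 0))
          = (if k = i then u i * u i + 2 else 1) := by
      intro k
      by_cases h : k = i
      · subst h; simp
      · simp [h]
    simp only [h3]
    rw [Finset.prod_ite_eq' Finset.univ i (fun _ => u i * u i + 2)]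
    simp
  · have h3 : ∀ k : Fin p, ((if k = i then -u k else 1) * (if k = j then -u k else 1)
        + (if k = i then (if k = j then 2 else 0) else 0))
          = (if k = i then -u k else 1) * (if k = j then -u k else 1) := by
      intro k
      by_cases h : k = i
      · have hkj : ¬k = j := by rw [h]; exact hij
        simp only [if_pos h, if_neg hkj, add_zero]
      · simp only [if_neg h, add_zero]
    simp only [h3]
    rw [Finset.prod_mul_distrib, Finset.prod_ite_eq' Finset.univ i (fun k => -u k),
      Finset.prod_ite_eq' Finset.univ j (fun k => -u k)]
    simp [hij]

lemma FW_expand {p : ℕ} (u a : Fin p → ℝ) :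
    (fun x : Fin p → ℝ => (∑ i, x i * a i) ^ 2 * ∏ i, rexp ((x i - u i) ^ 2 / 4))
      = fun x => ∑ i, ∑ j, (a i * a j) * ∏ k, ff u i j k (x k) := by
  ext x
  simp only [ff_prod]
  rw [sq, Finset.sum_mul_sum, Finset.sum_mul]
  refine Finset.sum_congr rfl fun i _ => ?_
  rw [Finset.sum_mul]
  refine Finset.sum_congr rfl fun j _ => ?_
  ring

lemma FW_int {p : ℕ} (u a : Fin p → ℝ) :
    Integrable (fun x : Fin p → ℝ => (∑ i, x i * a i) ^ 2 * ∏ i, rexp ((x i - u i) ^ 2 / 4))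
      (Measure.pi fun _ : Fin p => gaussianReal 0 1) := by
  rw [FW_expand]
  refine integrable_finset_sum _ fun i _ => integrable_finset_sum _ fun j _ => ?_
  exact (pi_integrable (ff u i j) (fun k => ff_integrable u i j k)).const_mul _

lemma FW_val {p : ℕ} (u a : Fin p → ℝ) :
    ∫ x, ((∑ i, x i * a i) ^ 2 * ∏ i, rexp ((x i - u i) ^ 2 / 4))
        ∂(Measure.pi fun _ : Fin p => gaussianReal 0 1)
      = ((Real.sqrt 2) ^ p * rexp ((∑ k, (u k) ^ 2) / 2))
        * ((∑ i, u i * a i) ^ 2 + 2 * ∑ i, a i ^ 2) := by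
  have h0 : ∫ x, ((∑ i, x i * a i) ^ 2 * ∏ i, rexp ((x i - u i) ^ 2 / 4))
        ∂(Measure.pi fun _ : Fin p => gaussianReal 0 1)
      = ∑ i, ∑ j, (a i * a j)
          * (((Real.sqrt 2) ^ p * rexp ((∑ k, (u k) ^ 2) / 2))
            * (u i * u j + if i = j then 2 else 0)) := by
    rw [show (fun x : Fin p → ℝ => (∑ i, x i * a i) ^ 2 * ∏ i, rexp ((x i - u i) ^ 2 / 4))
        = fun x => ∑ i, ∑ j, (a i * a j) * ∏ k, ff u i j k (x k) from FW_expand u a]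
    rw [integral_finset_sum _ fun i _ => integrable_finset_sum _ fun j _ =>
      (pi_integrable (ff u i j) (fun k => ff_integrable u i j k)).const_mul _]
    refine Finset.sum_congr rfl fun i _ => ?_
    rw [integral_finset_sum _ fun j _ =>
      (pi_integrable (ff u i j) (fun k => ff_integrable u i j k)).const_mul _]
    refine Finset.sum_congr rfl fun j _ => ?_
    rw [integral_const_mul, pi_eval, prod_ff_integral]
  rw [h0]
  set K := (Real.sqrt 2) ^ p * rexp ((∑ k, (u k) ^ 2) / 2) with hK
  have h1 : ∀ i j : Fin p, (a i * a j) * (K * (u i * u j + if i = j then 2 else 0))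
      = K * ((u i * a i) * (u j * a j)) + (if i = j then K * (2 * (a i * a j)) else 0) := by
    intro i j
    by_cases h : i = j
    · subst h
      simp
      ring
    · simp only [if_neg h]
      ring
  simp only [h1, Finset.sum_add_distrib]
  have h2 : ∀ i : Fin p, (∑ j, if i = j then K * (2 * (a i * a j)) else 0)
      = K * (2 * (a i * a i)) := by
    intro i
    rw [Finset.sum_ite_eq Finset.univ i (fun j => K * (2 * (a i * a j)))]
    simp
  have h3 : (∑ i, ∑ j, K * ((u i * a i) * (u j * a j)))
      = K * (∑ i, u i * a i) ^ 2 := by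
    rw [sq, Finset.sum_mul_sum, Finset.mul_sum]
    refine Finset.sum_congr rfl fun i _ => ?_
    rw [Finset.mul_sum]
  have h4 : (∑ i, 2 * (a i * a i)) = 2 * ∑ i, a i ^ 2 := by
    rw [Finset.mul_sum]
    refine Finset.sum_congr rfl fun i _ => ?_
    ring
  simp only [h2, h3]
  rw [← Finset.mul_sum, h4]
  ring


/-- For a standard Gaussian vector `γ` in `ℝ^p`, a unit vector `a`, `u ∈ ℝ^p` and `z > 0`,
`E[|γᵀa|² 1{‖γ - u‖ ≥ z}] ≤ (2 + |uᵀa|²) exp(-z²/4 + p/2 + ‖u‖²/2)`. -/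
theorem gauss_quad_tail_bound (p : ℕ) (u a : Fin p → ℝ) (ha : ∑ i, a i ^ 2 = 1)
    (z : ℝ) (hz : 0 < z) :
    ∫ x in {x : Fin p → ℝ | z ≤ Real.sqrt (∑ i, (x i - u i) ^ 2)},
        (∑ i, x i * a i) ^ 2 ∂(Measure.pi fun _ : Fin p => gaussianReal 0 1) ≤
      (2 + (∑ i, u i * a i) ^ 2) * Real.exp (-z ^ 2 / 4 + p / 2 + (∑ i, u i ^ 2) / 2) := by
  set μp := Measure.pi fun _ : Fin p => gaussianReal 0 1 with hμp
  set S : Set (Fin p → ℝ) := {x | z ≤ Real.sqrt (∑ i, (x i - u i) ^ 2)} with hS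
  set g : (Fin p → ℝ) → ℝ := fun x =>
    rexp (-z ^ 2 / 4) * ((∑ i, x i * a i) ^ 2 * ∏ i, rexp ((x i - u i) ^ 2 / 4)) with hg
  have hW_int : Integrable
      (fun x : Fin p → ℝ => (∑ i, x i * a i) ^ 2 * ∏ i, rexp ((x i - u i) ^ 2 / 4)) μp :=
    FW_int u a
  have hg_int : Integrable g μp := hW_int.const_mul _
  have hSm : MeasurableSet S := by
    have hm : Measurable fun x : Fin p → ℝ => Real.sqrt (∑ i, (x i - u i) ^ 2) := by
      fun_prop
    exact measurableSet_le measurable_const hm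
  have hFm : Measurable fun x : Fin p → ℝ => (∑ i, x i * a i) ^ 2 := by fun_prop
  have key1 : ∀ x ∈ S, (∑ i, x i * a i) ^ 2 ≤ g x := by
    intro x hx
    have hs0 : (0:ℝ) ≤ ∑ i, (x i - u i) ^ 2 := Finset.sum_nonneg fun i _ => sq_nonneg _
    have hz2 : z ^ 2 ≤ ∑ i, (x i - u i) ^ 2 := by
      have hxx : z ≤ Real.sqrt (∑ i, (x i - u i) ^ 2) := hx
      nlinarith [Real.sq_sqrt hs0, Real.sqrt_nonneg (∑ i, (x i - u i) ^ 2)]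
    have hone : (1:ℝ) ≤ rexp (-z ^ 2 / 4) * ∏ i, rexp ((x i - u i) ^ 2 / 4) := by
      rw [← Real.exp_sum, ← Real.exp_add]
      refine Real.one_le_exp ?_
      rw [← Finset.sum_div]
      linarith
    have := mul_le_mul_of_nonneg_left hone (sq_nonneg (∑ i, x i * a i))
    rw [mul_one] at this
    calc (∑ i, x i * a i) ^ 2
        ≤ (∑ i, x i * a i) ^ 2 * (rexp (-z ^ 2 / 4) * ∏ i, rexp ((x i - u i) ^ 2 / 4)) := this
      _ = g x := by rw [hg]; ring
  have hF_on : IntegrableOn (fun x : Fin p → ℝ => (∑ i, x i * a i) ^ 2) S μp := by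
    refine Integrable.mono (hg_int.restrict (s := S)) hFm.aestronglyMeasurable ?_
    filter_upwards [ae_restrict_mem hSm] with x hx
    rw [Real.norm_eq_abs, Real.norm_eq_abs, abs_of_nonneg (sq_nonneg _), abs_of_nonneg]
    · exact key1 x hx
    · rw [hg]; positivity
  have step1 : ∫ x in S, (∑ i, x i * a i) ^ 2 ∂μp ≤ ∫ x in S, g x ∂μp :=
    setIntegral_mono_on hF_on hg_int.integrableOn hSm key1
  have step2 : ∫ x in S, g x ∂μp ≤ ∫ x, g x ∂μp := by
    refine setIntegral_le_integral hg_int (ae_of_all _ fun x => ?_)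
    rw [hg]; positivity
  have step3 : ∫ x, g x ∂μp
      = rexp (-z ^ 2 / 4) * (((Real.sqrt 2) ^ p * rexp ((∑ k, (u k) ^ 2) / 2))
        * ((∑ i, u i * a i) ^ 2 + 2 * ∑ i, a i ^ 2)) := by
    rw [hg, integral_const_mul, FW_val]
  have hsq : (Real.sqrt 2) ^ p ≤ rexp (p / 2) := by
    have h2e : Real.sqrt 2 ≤ rexp (1 / 2) := by
      have hse : Real.sqrt (rexp 1) = rexp (1 / 2) := by
        rw [show rexp 1 = rexp (1 / 2) * rexp (1 / 2) by rw [← Real.exp_add]; norm_num,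
          Real.sqrt_mul_self (Real.exp_pos _).le]
      rw [← hse]
      exact Real.sqrt_le_sqrt (by linarith [Real.add_one_le_exp (1:ℝ)])
    calc (Real.sqrt 2) ^ p ≤ (rexp (1 / 2)) ^ p :=
          pow_le_pow_left₀ (Real.sqrt_nonneg 2) h2e p
      _ = rexp (p / 2) := by
          rw [← Real.exp_nat_mul]
          congr 1
          ring
  refine (step1.trans (step2.trans (le_of_eq step3))).trans ?_
  rw [ha, show -z ^ 2 / 4 + (p:ℝ) / 2 + (∑ i, u i ^ 2) / 2
      = (-z ^ 2 / 4 + (∑ i, u i ^ 2) / 2) + (p:ℝ) / 2 by ring, Real.exp_add, Real.exp_add]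
  have hpos : (0:ℝ) ≤ rexp (-z ^ 2 / 4) * rexp ((∑ i, u i ^ 2) / 2)
      * ((∑ i, u i * a i) ^ 2 + 2 * 1) := by positivity
  calc rexp (-z ^ 2 / 4) * (((Real.sqrt 2) ^ p * rexp ((∑ k, (u k) ^ 2) / 2))
        * ((∑ i, u i * a i) ^ 2 + 2 * 1))
      = (rexp (-z ^ 2 / 4) * rexp ((∑ i, u i ^ 2) / 2)
          * ((∑ i, u i * a i) ^ 2 + 2 * 1)) * (Real.sqrt 2) ^ p := by ring
    _ ≤ (rexp (-z ^ 2 / 4) * rexp ((∑ i, u i ^ 2) / 2)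
          * ((∑ i, u i * a i) ^ 2 + 2 * 1)) * rexp (p / 2) :=
        mul_le_mul_of_nonneg_left hsq hpos
    _ = (2 + (∑ i, u i * a i) ^ 2) * (rexp (-z ^ 2 / 4) * rexp ((∑ i, u i ^ 2) / 2)
          * rexp (↑p / 2)) := by ring
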